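/- (Bauer–Fike) Let A be a complex n×n matrix that is diagonalizable, A = VΛV⁻¹ with V invertible and Λ diagonal with the eigenvalues of A on its diagonal. Let Δ be any complex n×n matrix and let r be an eigenvalue of A + Δ. Then there exists an eigenvalue λ of A such that |λ − r| ≤ κ₂(V)·‖Δ‖₂, where κ₂(V) = ‖V‖₂‖V⁻¹‖₂ is the spectral condition number of V and ‖·‖₂ is the spectral (operator 2-) norm. -/

import Mathlib

set_option maxHeartbeats 1000000
open Matrix

lemma diag_opNorm_le {n : ℕ} (v : Fin n → ℂ) (c : ℝ) (hc : 0 ≤ c)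
    (h : ∀ i, ‖v i‖ ≤ c) :
    ‖Matrix.toEuclideanCLM (𝕜 := ℂ) (Matrix.diagonal v)‖ ≤ c := by
  apply ContinuousLinearMap.opNorm_le_bound _ hc
  intro x
  rw [EuclideanSpace.norm_eq, EuclideanSpace.norm_eq]
  have hx : ∀ i, ‖(Matrix.toEuclideanCLM (𝕜 := ℂ) (Matrix.diagonal v)) x i‖ = ‖v i * x i‖ := by
    intro i
    congr 1
    have h2 : WithLp.equiv 2 (Fin n → ℂ) ((Matrix.toEuclideanCLM (𝕜 := ℂ) (Matrix.diagonal v)) x) i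
        = v i * x i := by
      change (Matrix.diagonal v *ᵥ WithLp.ofLp x) i = v i * x i
      exact Matrix.mulVec_diagonal v (WithLp.ofLp x) i
    exact h2
  simp only [hx]
  rw [← Real.sqrt_sq hc, ← Real.sqrt_mul (sq_nonneg c)]
  apply Real.sqrt_le_sqrt
  rw [Finset.mul_sum]
  apply Finset.sum_le_sum
  intro i _
  rw [norm_mul, mul_pow]
  gcongr
  exact h i

lemma diag_mem_spectrum {n : ℕ} (d : Fin n → ℂ) (i : Fin n) :
    d i ∈ spectrum ℂ (Matrix.diagonal d) := by
  rw [spectrum.mem_iff]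
  intro hu
  rw [Matrix.isUnit_iff_isUnit_det] at hu
  have : algebraMap ℂ (Matrix (Fin n) (Fin n) ℂ) (d i) - Matrix.diagonal d
      = Matrix.diagonal (fun j => d i - d j) := by
    rw [Matrix.algebraMap_eq_diagonal, ← Matrix.diagonal_sub]
    rfl
  rw [this, Matrix.det_diagonal] at hu
  rw [Finset.prod_eq_zero (Finset.mem_univ i) (by simp)] at hu
  simp at hu

/-- Operator norm of a complex matrix induced by the Euclidean vector norm. -/
noncomputable def matOpNormC {n : ℕ} (A : Matrix (Fin n) (Fin n) ℂ) : ℝ :=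
  ‖Matrix.toEuclideanCLM (𝕜 := ℂ) A‖

/-- Bauer–Fike theorem: if `A = V Λ V⁻¹` is diagonalizable and `r` is an eigenvalue of
`A + Δ`, then some eigenvalue `λ` of `A` satisfies `|λ − r| ≤ κ₂(V) ‖Δ‖₂`. -/
theorem bauer_fike
    (n : ℕ) (A V Λ Δ : Matrix (Fin n) (Fin n) ℂ)
    (hV : IsUnit V) (hΛ : Λ.IsDiag) (hA : A = V * Λ * V⁻¹)
    (r : ℂ) (hr : r ∈ spectrum ℂ (A + Δ)) :
    ∃ l ∈ spectrum ℂ A,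
      ‖l - r‖ ≤ (matOpNormC V * matOpNormC V⁻¹) * matOpNormC Δ := by
  rcases Nat.eq_zero_or_pos n with hn | hn
  · subst hn
    exact absurd (isUnit_of_subsingleton _) (spectrum.mem_iff.mp hr)
  have : Nonempty (Fin n) := Fin.pos_iff_nonempty.mp hn
  set d : Fin n → ℂ := Λ.diag with hd
  have hΛd : Λ = Matrix.diagonal d := (hΛ.diagonal_diag).symm
  obtain ⟨i₀, -, hmin⟩ := Finset.exists_min_image Finset.univ
    (fun j => ‖d j - r‖) Finset.univ_nonempty
  have hVdet : IsUnit V.det := (Matrix.isUnit_iff_isUnit_det V).mp hV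
  have hVV : V * V⁻¹ = 1 := Matrix.mul_nonsing_inv V hVdet
  have hVV' : V⁻¹ * V = 1 := Matrix.nonsing_inv_mul V hVdet
  have hspec : spectrum ℂ A = spectrum ℂ Λ := by
    have hAu : A = (hV.unit : Matrix (Fin n) (Fin n) ℂ) * Λ *
        ((hV.unit⁻¹ : (Matrix (Fin n) (Fin n) ℂ)ˣ) : Matrix (Fin n) (Fin n) ℂ) := by
      rw [Matrix.coe_units_inv, hV.unit_spec, hA]
    rw [hAu, spectrum.units_conjugate]
  have hlmem : d i₀ ∈ spectrum ℂ A := by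
    rw [hspec, hΛd]; exact diag_mem_spectrum d i₀
  refine ⟨d i₀, hlmem, ?_⟩
  simp only [matOpNormC]
  set m : ℝ := ‖d i₀ - r‖ with hm
  rcases eq_or_lt_of_le (norm_nonneg (d i₀ - r)) with hm0 | hm0
  · rw [← hm] at hm0
    rw [← hm0]
    exact mul_nonneg (mul_nonneg (norm_nonneg _) (norm_nonneg _)) (norm_nonneg _)
  rw [← hm] at hm0
  -- main case: m > 0
  have hne0 : ∀ j, d j - r ≠ 0 := by
    intro j hj
    have := hmin j (Finset.mem_univ j)
    rw [hj] at this
    simp only [norm_zero] at this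
    exact absurd (lt_of_lt_of_le hm0 this) (lt_irrefl 0)
  set D : Matrix (Fin n) (Fin n) ℂ := Matrix.diagonal (fun j => d j - r) with hD
  set E : Matrix (Fin n) (Fin n) ℂ := Matrix.diagonal (fun j => (d j - r)⁻¹) with hE
  have hDE : D * E = 1 := by
    rw [hD, hE, Matrix.diagonal_mul_diagonal]
    have : (fun i => (d i - r) * (d i - r)⁻¹) = fun _ : Fin n => (1:ℂ) :=
      funext fun j => mul_inv_cancel₀ (hne0 j)
    rw [this, Matrix.diagonal_one]
  have hED : E * D = 1 := by
    rw [hD, hE, Matrix.diagonal_mul_diagonal]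
    have : (fun i => (d i - r)⁻¹ * (d i - r)) = fun _ : Fin n => (1:ℂ) :=
      funext fun j => inv_mul_cancel₀ (hne0 j)
    rw [this, Matrix.diagonal_one]
  set W : Matrix (Fin n) (Fin n) ℂ := V * D * V⁻¹ with hW
  set W' : Matrix (Fin n) (Fin n) ℂ := V * E * V⁻¹ with hW'
  have key : ∀ X Y : Matrix (Fin n) (Fin n) ℂ,
      (V * X * V⁻¹) * (V * Y * V⁻¹) = V * (X * Y) * V⁻¹ := by
    intro X Y
    rw [show V * X * V⁻¹ * (V * Y * V⁻¹) = V * X * (V⁻¹ * V) * (Y * V⁻¹) by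
      simp only [Matrix.mul_assoc], hVV', Matrix.mul_one]
    simp only [Matrix.mul_assoc]
  have hWW' : W * W' = 1 := by rw [hW, hW', key, hDE, Matrix.mul_one, hVV]
  have hW'W : W' * W = 1 := by rw [hW, hW', key, hED, Matrix.mul_one, hVV]
  have hWunit : IsUnit W := ⟨⟨W, W', hWW', hW'W⟩, rfl⟩
  have hWform : W = A - algebraMap ℂ (Matrix (Fin n) (Fin n) ℂ) r := by
    rw [hW, hA, hΛd]
    have h1 : D = Matrix.diagonal d - algebraMap ℂ (Matrix (Fin n) (Fin n) ℂ) r := by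
      rw [hD, Matrix.algebraMap_eq_diagonal, ← Matrix.diagonal_sub]
      rfl
    rw [h1, mul_sub, sub_mul]
    congr 1
    rw [← Algebra.commutes r V, mul_assoc, hVV, mul_one]
  have hnu : ¬ IsUnit ((1 : Matrix (Fin n) (Fin n) ℂ) + W' * Δ) := by
    intro hu
    apply spectrum.mem_iff.mp hr
    have heq : algebraMap ℂ (Matrix (Fin n) (Fin n) ℂ) r - (A + Δ)
        = -(W * (1 + W' * Δ)) := by
      rw [Matrix.mul_add, Matrix.mul_one, ← Matrix.mul_assoc, hWW', Matrix.one_mul, hWform]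
      abel
    rw [heq, IsUnit.neg_iff]
    exact hWunit.mul hu
  have h1mem : (-1 : ℂ) ∈ spectrum ℂ (W' * Δ) := by
    rw [spectrum.mem_iff]
    intro hu
    apply hnu
    have heq : algebraMap ℂ (Matrix (Fin n) (Fin n) ℂ) (-1) - W' * Δ
        = -((1 : Matrix (Fin n) (Fin n) ℂ) + W' * Δ) := by
      rw [map_neg, _root_.map_one]; abel
    rw [heq, IsUnit.neg_iff] at hu
    exact hu
  -- transfer to CLMs
  set T := Matrix.toEuclideanCLM (n := Fin n) (𝕜 := ℂ) with hT
  have h1mem' : (-1 : ℂ) ∈ spectrum ℂ (T (W' * Δ)) := by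
    rwa [AlgEquiv.spectrum_eq]
  have hnorm1 : (1 : ℝ) ≤ ‖T (W' * Δ)‖ := by
    have := spectrum.norm_le_norm_of_mem h1mem'
    simpa using this
  have hsplit : T (W' * Δ) = T V * T E * T V⁻¹ * T Δ := by
    rw [hW', _root_.map_mul, _root_.map_mul, _root_.map_mul]
  have hEnorm : ‖T E‖ ≤ m⁻¹ := by
    rw [hE, hT]
    apply diag_opNorm_le _ _ (inv_nonneg.mpr (le_of_lt hm0))
    intro j
    rw [norm_inv]
    exact inv_anti₀ hm0 (hmin j (Finset.mem_univ j))
  have hchain : (1 : ℝ) ≤ ‖T V‖ * ‖T E‖ * ‖T V⁻¹‖ * ‖T Δ‖ := by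
    calc (1:ℝ) ≤ ‖T (W' * Δ)‖ := hnorm1
    _ = ‖T V * T E * T V⁻¹ * T Δ‖ := by rw [hsplit]
    _ ≤ ‖T V * T E * T V⁻¹‖ * ‖T Δ‖ := norm_mul_le _ _
    _ ≤ (‖T V * T E‖ * ‖T V⁻¹‖) * ‖T Δ‖ :=
      mul_le_mul_of_nonneg_right (norm_mul_le _ _) (norm_nonneg _)
    _ ≤ ((‖T V‖ * ‖T E‖) * ‖T V⁻¹‖) * ‖T Δ‖ :=
      mul_le_mul_of_nonneg_right (mul_le_mul_of_nonneg_right (norm_mul_le _ _) (norm_nonneg _))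
        (norm_nonneg _)
  have hfinal : (1 : ℝ) ≤ ‖T V‖ * m⁻¹ * ‖T V⁻¹‖ * ‖T Δ‖ := by
    refine le_trans hchain ?_
    gcongr
  have hmm : m * m⁻¹ = 1 := mul_inv_cancel₀ (ne_of_gt hm0)
  have hgoal : m ≤ ‖T V‖ * ‖T V⁻¹‖ * ‖T Δ‖ := by
    nlinarith [norm_nonneg (T V), norm_nonneg (T V⁻¹), norm_nonneg (T Δ), hm0]
  exact hgoal
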